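/- For every integer m ≥ 0 and every nonzero complex number λ, ∫_{-1}^1 e^{-iλx} P_m(x) dx = ∑_{n=1}^{m+1} β_n^m [e^{iλ}/(iλ)^n + (-1)^{m+n} e^{-iλ}/(iλ)^n], where the coefficients β_n^m are: β_1^m = 1 when m is even; for n ≡ m+1 (mod 2) with 2 ≤ n ≤ m+1 (and n ≥ 3 if m even), β_n^m = ((m+n) C((m+n-3)/2, n-1) + C((m+n-3)/2, n-2)) R_{(m-n+3)/2, (m+n-3)/2}(m); and for n ≡ m (mod 2) with 1 ≤ n ≤ m, β_n^m = -C((m+n)/2 - 1, n-1) R_{(m-n)/2 + 1, (m+n)/2 - 1}(m); here R_{s,t}(r) = ∏_{k=s}^t (2(r-k)+1) for s ≤ t and 1 otherwise, and C(s,t) = 0 when s < t. -/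

import Mathlib

open MeasureTheory Polynomial Finset

/-- The Legendre polynomial `P_m(x) = (1/(2^m m!)) dᵐ/dxᵐ ((x²-1)^m)`. -/
noncomputable def legendre (m : ℕ) : Polynomial ℝ :=
  Polynomial.C (1 / (2^m * (m.factorial : ℝ))) * derivative^[m] ((X^2 - 1)^m)

/-- `R_{s,t}(r) = ∏_{k=s}^t (2(r-k)+1)`, an empty product being `1`. -/
noncomputable def Rst (s t r : ℕ) : ℂ :=
  ∏ k ∈ Finset.Icc s t, (2 * ((r:ℂ) - (k:ℂ)) + 1)

/-- The coefficients `β_n^m` in the finite Fourier transform of the Legendre polynomials. -/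
noncomputable def betaCoeff (m n : ℕ) : ℂ :=
  if n % 2 = m % 2 then
    -- `n` has the same parity as `m` (with `1 ≤ n ≤ m`): formula (7L)
    -(((m + n) / 2 - 1).choose (n - 1) : ℂ) * Rst ((m - n) / 2 + 1) ((m + n) / 2 - 1) m
  else if n = 1 then
    -- `m` even, `n = 1`: formula (5L)
    1
  else
    -- `n` of parity opposite to `m` with `2 ≤ n ≤ m + 1`: formula (6L)
    (((m:ℂ) + (n:ℂ)) * (((m + n - 3) / 2).choose (n - 1) : ℂ)
        + (((m + n - 3) / 2).choose (n - 2) : ℂ)) *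
      Rst ((m - n + 3) / 2) ((m + n - 3) / 2) m

lemma prodA (a d : ℕ) :
    (((d+a).choose d : ℂ)) * (∏ j ∈ Finset.Icc (a+1) (d+a), (2*(j:ℂ)+1)) *
      (2^d * (d.factorial:ℂ) * ((2*a+1).factorial:ℂ)) = ((2*(d+a)+1).factorial : ℂ) := by
  induction d with
  | zero => simp
  | succ d IH =>
    have hC : ((d+a+1).choose (d+1) : ℂ) * (d+1) = (d+a+1) * ((d+a).choose d : ℂ) := by
      exact_mod_cast (Nat.add_one_mul_choose_eq (d+a) d).symm
    rw [show d+1+a = d+a+1 by ring, Finset.prod_Icc_succ_top (by omega)]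
    have hF : ((2*(d+a+1)+1).factorial : ℂ)
        = (2*(d+a)+3) * ((2*(d+a)+2) * ((2*(d+a)+1).factorial : ℂ)) := by
      have : 2*(d+a+1)+1 = (2*(d+a)+2)+1 := by ring
      rw [this, Nat.factorial_succ, Nat.factorial_succ]
      push_cast; ring
    rw [hF, ← IH]
    have hfd : ((d+1).factorial : ℂ) = (d+1) * d.factorial := by
      rw [Nat.factorial_succ]; push_cast; ring
    rw [hfd]
    push_cast
    linear_combination (2*((d:ℂ)+a+1)+1) * 2 * (∏ j ∈ Finset.Icc (a+1) (d+a), (2*(j:ℂ)+1)) *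
      (2^d * (d.factorial:ℂ) * ((2*a+1).factorial:ℂ)) * hC

noncomputable def legC (m : ℕ) : Polynomial ℂ := (legendre m).map (algebraMap ℝ ℂ)

lemma legC_eq (m : ℕ) :
    legC m = Polynomial.C ((1:ℂ) / (2^m * m.factorial)) * derivative^[m] (((X:ℂ[X])^2 - 1)^m) := by
  unfold legC legendre
  rw [Polynomial.map_mul, Polynomial.map_C, ← Polynomial.iterate_derivative_map]
  congr 1
  · congr 1
    rw [Complex.coe_algebraMap]
    push_cast
    ring
  · congr 1
    rw [Polynomial.map_pow, Polynomial.map_sub, Polynomial.map_pow, Polynomial.map_X,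
      Polynomial.map_one]

lemma natDegree_legC_le (m : ℕ) : (legC m).natDegree ≤ m := by
  rw [legC_eq]
  refine le_trans (Polynomial.natDegree_C_mul_le _ _) ?_
  refine le_trans (Polynomial.natDegree_iterate_derivative _ _) ?_
  have h2 : (((X:ℂ[X])^2 - 1)^m).natDegree ≤ 2*m := by
    refine le_trans (Polynomial.natDegree_pow_le) ?_
    have : ((X:ℂ[X])^2 - 1).natDegree ≤ 2 := by
      refine le_trans (Polynomial.natDegree_sub_le _ _) ?_
      simp [Polynomial.natDegree_X_pow]
    calc m * ((X:ℂ[X])^2 - 1).natDegree ≤ m * 2 := Nat.mul_le_mul_left m this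
    _ = 2*m := by ring
  omega

lemma Rst_reindex (s t m : ℕ) (hs : s ≤ m) (ht : t ≤ m) :
    Rst s t m = ∏ j ∈ Finset.Icc (m - t) (m - s), (2*(j:ℂ)+1) := by
  unfold Rst
  refine Finset.prod_nbij' (fun k => m - k) (fun j => m - j) ?_ ?_ ?_ ?_ ?_
  · intro k hk
    simp only [Finset.mem_Icc] at *
    omega
  · intro j hj
    simp only [Finset.mem_Icc] at *
    omega
  · intro k hk
    simp only [Finset.mem_Icc] at hk
    show m - (m - k) = k
    omega
  · intro j hj
    simp only [Finset.mem_Icc] at hj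
    show m - (m - j) = j
    omega
  · intro k hk
    simp only [Finset.mem_Icc] at hk
    have : ((m - k : ℕ) : ℂ) = (m : ℂ) - k := by
      push_cast [Nat.cast_sub (by omega : k ≤ m)]; ring
    rw [this]

lemma key_prod_eval_one (m k : ℕ) (hk : k ≤ m) :
    (derivative^[m+k] ((((X:ℂ[X]) - Polynomial.C 1)^m) * (((X:ℂ[X]) + Polynomial.C 1)^m))).eval 1
      = ((m+k).choose k : ℂ) * (m.factorial : ℂ) * (m.descFactorial k : ℂ) * 2^(m-k) := by
  rw [Polynomial.iterate_derivative_mul, Polynomial.eval_finset_sum]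
  rw [Finset.sum_eq_single k]
  · rw [show m + k - k = m by omega, Polynomial.iterate_derivative_X_sub_pow_self,
      Polynomial.iterate_derivative_X_add_pow]
    simp only [smul_eval, eval_mul, eval_natCast, eval_C, eval_smul, eval_pow, eval_add, eval_X, eval_one,
      nsmul_eq_mul]
    push_cast
    ring
  · intro i hi hik
    simp only [Finset.mem_range] at hi
    rw [Polynomial.iterate_derivative_X_sub_pow, Polynomial.iterate_derivative_X_add_pow]
    rcases lt_or_gt_of_ne hik with h | h
    · -- i < k : m + k - i > m, descFactorial m (m+k-i) = 0
      have : m.descFactorial (m+k-i) = 0 := Nat.descFactorial_eq_zero_iff_lt.2 (by omega)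
      simp [this]
    · -- i > k : m + k - i < m, (X-1)^(m - (m+k-i)) has positive exponent, eval 1 = 0
      have hpos : 0 < m - (m + k - i) := by omega
      simp only [smul_eval, eval_mul, eval_natCast, eval_C, eval_smul, eval_pow, eval_sub, eval_add, eval_X, eval_one,
        nsmul_eq_mul]
      rw [sub_self, zero_pow (by omega)]
      ring
  · intro h
    exact absurd (Finset.mem_range.2 (by omega)) h

lemma key_prod_eval_neg_one (m k : ℕ) (hk : k ≤ m) :
    (derivative^[m+k] ((((X:ℂ[X]) - Polynomial.C 1)^m) * (((X:ℂ[X]) + Polynomial.C 1)^m))).eval (-1)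
      = ((m+k).choose k : ℂ) * (m.factorial : ℂ) * (m.descFactorial k : ℂ) * (-2)^(m-k) := by
  rw [Polynomial.iterate_derivative_mul, Polynomial.eval_finset_sum]
  rw [Finset.sum_eq_single m]
  · rw [Polynomial.iterate_derivative_X_sub_pow, Polynomial.iterate_derivative_X_add_pow,
      show m + k - m = k by omega, Nat.sub_self, Nat.descFactorial_self]
    simp only [smul_eval, eval_mul, eval_natCast, eval_C, eval_smul, eval_pow, eval_sub, eval_add, eval_X, eval_one,
      pow_zero, nsmul_eq_mul]
    rw [show (-1:ℂ) - 1 = -2 by ring, Nat.choose_symm_add]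
    push_cast
    ring
  · intro i hi him
    simp only [Finset.mem_range] at hi
    rw [Polynomial.iterate_derivative_X_sub_pow, Polynomial.iterate_derivative_X_add_pow]
    rcases lt_or_gt_of_ne him with h | h
    · -- i < m : (X+1)^(m-i) positive exponent, eval -1 = 0
      simp only [smul_eval, eval_mul, eval_natCast, eval_C, eval_smul, eval_pow, eval_sub, eval_add, eval_X, eval_one,
        nsmul_eq_mul]
      rw [show (-1:ℂ) + 1 = 0 by ring, zero_pow (by omega)]
      ring
    · -- i > m : descFactorial m i = 0
      have : m.descFactorial i = 0 := Nat.descFactorial_eq_zero_iff_lt.2 (by omega)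
      simp [this]
  · intro h
    exact absurd (Finset.mem_range.2 (by omega)) h

lemma iter_deriv_legC (m k : ℕ) :
    derivative^[k] (legC m)
      = Polynomial.C ((1:ℂ)/(2^m * m.factorial)) * derivative^[m+k] (((X:ℂ[X])^2-1)^m) := by
  rw [legC_eq, Polynomial.iterate_derivative_C_mul]
  congr 1
  rw [← Function.iterate_add_apply, add_comm k m]

lemma sq_sub_one_factor : ((X:ℂ[X])^2 - 1) = (X - Polynomial.C 1) * (X + Polynomial.C 1) := by
  rw [Polynomial.C_1]; ring

lemma legC_eval_one (m k : ℕ) (hk : k ≤ m) :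
    (derivative^[k] (legC m)).eval 1 * (2^k * (k.factorial:ℂ) * ((m-k).factorial:ℂ))
      = ((m+k).factorial : ℂ) := by
  rw [iter_deriv_legC, sq_sub_one_factor, mul_pow, Polynomial.eval_mul, Polynomial.eval_C,
    key_prod_eval_one m k hk]
  have hc : ((m+k).choose k : ℂ) * (k.factorial : ℂ) * (m.factorial : ℂ) = ((m+k).factorial : ℂ) := by
    have := Nat.choose_mul_factorial_mul_factorial (show k ≤ m + k by omega)
    rw [show m + k - k = m by omega] at this
    exact_mod_cast this
  have hd : ((m-k).factorial : ℂ) * (m.descFactorial k : ℂ) = (m.factorial : ℂ) := by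
    exact_mod_cast Nat.factorial_mul_descFactorial hk
  have hp : (2:ℂ)^(m-k) * 2^k = 2^m := by
    rw [← pow_add]
    congr 1
    omega
  have h2 : (2:ℂ)^m ≠ 0 := pow_ne_zero _ two_ne_zero
  have hf : (m.factorial : ℂ) ≠ 0 := Nat.cast_ne_zero.2 (Nat.factorial_ne_zero m)
  have hne : (2:ℂ)^m * (m.factorial : ℂ) ≠ 0 := mul_ne_zero h2 hf
  rw [div_mul_eq_mul_div, one_mul, div_mul_eq_mul_div, div_eq_iff hne]
  linear_combination (((m+k).choose k : ℂ) * (m.factorial:ℂ) * 2^(m-k) * 2^k * (k.factorial:ℂ)) * hd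
    + ((m.factorial:ℂ) * 2^(m-k) * 2^k) * hc
    + (((m+k).factorial : ℂ) * (m.factorial:ℂ)) * hp

lemma legC_eval_neg_one (m k : ℕ) (hk : k ≤ m) :
    (derivative^[k] (legC m)).eval (-1)
      = (-1:ℂ)^(m+k) * (derivative^[k] (legC m)).eval 1 := by
  rw [iter_deriv_legC, sq_sub_one_factor, mul_pow, Polynomial.eval_mul, Polynomial.eval_mul,
    Polynomial.eval_C, Polynomial.eval_C, key_prod_eval_one m k hk, key_prod_eval_neg_one m k hk]
  have hsgn : ((-2):ℂ)^(m-k) = (-1)^(m+k) * 2^(m-k) := by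
    rw [show ((-2):ℂ) = (-1) * 2 by ring, mul_pow]
    congr 1
    rw [show m + k = (m - k) + 2*k by omega, pow_add, pow_mul]
    norm_num
  rw [hsgn]
  ring

lemma integral_exp_mul_legC (m : ℕ) (l : ℂ) (hl : l ≠ 0) :
    (∫ x in (-1:ℝ)..1, Complex.exp (-(Complex.I*l) * x) * (legC m).eval (x:ℂ))
      = ∑ k ∈ Finset.range (m+1),
          (Complex.exp (Complex.I*l) * (derivative^[k] (legC m)).eval (-1)
            - Complex.exp (-(Complex.I*l)) * (derivative^[k] (legC m)).eval 1)
            / (Complex.I*l)^(k+1) := by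
  set μ : ℂ := Complex.I * l with hμdef
  have hμ : μ ≠ 0 := mul_ne_zero Complex.I_ne_zero hl
  set S : ℂ → ℂ :=
    fun z => ∑ k ∈ Finset.range (m+1), (derivative^[k] (legC m)).eval z / μ^(k+1) with hS
  have hSd : ∀ z : ℂ, HasDerivAt S
      (∑ k ∈ Finset.range (m+1), (derivative^[k+1] (legC m)).eval z / μ^(k+1)) z := by
    intro z
    rw [hS]
    apply HasDerivAt.fun_sum
    intro k _
    have h := (Polynomial.hasDerivAt (derivative^[k] (legC m)) z).div_const (μ^(k+1))
    simp only [Function.iterate_succ_apply']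
    exact h
  have hzero : derivative^[m+1] (legC m) = 0 :=
    Polynomial.iterate_derivative_eq_zero (lt_of_le_of_lt (natDegree_legC_le m) (Nat.lt_succ_self m))
  have key : ∀ z : ℂ,
      μ * S z - (∑ k ∈ Finset.range (m+1), (derivative^[k+1] (legC m)).eval z / μ^(k+1))
        = (legC m).eval z := by
    intro z
    have h1 : μ * S z = ∑ k ∈ Finset.range (m+1), (derivative^[k] (legC m)).eval z / μ^k := by
      rw [hS, Finset.mul_sum]
      refine Finset.sum_congr rfl fun k _ => ?_
      rw [pow_succ]
      field_simp
    have htel := Finset.sum_range_sub'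
      (fun k => (derivative^[k] (legC m)).eval z / μ^k) (m+1)
    rw [Finset.sum_sub_distrib] at htel
    simp only [pow_zero, div_one] at htel
    rw [hzero] at htel
    simp only [Polynomial.eval_zero, zero_div, sub_zero] at htel
    rw [h1]
    rw [sub_eq_iff_eq_add] at htel ⊢
    rw [htel]
    congr 1
  have hF : ∀ z : ℂ, HasDerivAt (fun z => -Complex.exp (-μ*z) * S z)
      (Complex.exp (-μ*z) * (legC m).eval z) z := by
    intro z
    have h0 : HasDerivAt (fun z : ℂ => -μ*z) (-μ) z := by
      simpa using (hasDerivAt_id z).const_mul (-μ)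
    have he := h0.cexp
    have hmul := (he.fun_neg).fun_mul (hSd z)
    refine hmul.congr_deriv ?_
    rw [← key z]
    ring
  have hcont : Continuous (fun x : ℝ => Complex.exp (-μ*x) * (legC m).eval (x:ℂ)) := by
    apply Continuous.mul
    · exact Complex.continuous_exp.comp (continuous_const.mul Complex.continuous_ofReal)
    · exact (legC m).continuous.comp Complex.continuous_ofReal
  have hint := intervalIntegral.integral_eq_sub_of_hasDerivAt
    (f := fun x : ℝ => -Complex.exp (-μ*x) * S (x:ℂ))
    (f' := fun x : ℝ => Complex.exp (-μ*x) * (legC m).eval (x:ℂ))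
    (a := (-1:ℝ)) (b := 1)
    (fun x _ => (hF x).comp_ofReal) (hcont.intervalIntegrable _ _)
  rw [hint]
  have expand : ∑ k ∈ Finset.range (m+1),
      (Complex.exp μ * (derivative^[k] (legC m)).eval (-1)
        - Complex.exp (-μ) * (derivative^[k] (legC m)).eval 1) / μ^(k+1)
      = Complex.exp μ * S (-1) - Complex.exp (-μ) * S 1 := by
    rw [hS, Finset.mul_sum, Finset.mul_sum, ← Finset.sum_sub_distrib]
    refine Finset.sum_congr rfl fun k _ => ?_
    rw [sub_div, mul_div_assoc, mul_div_assoc]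
  rw [expand]
  simp only [Complex.ofReal_one, Complex.ofReal_neg, mul_one, mul_neg, neg_neg, neg_mul]
  ring

lemma betaVal (m n : ℕ) (h1 : 1 ≤ n) (h2 : n ≤ m+1) :
    betaCoeff m n * (2^(n-1) * ((n-1).factorial : ℂ) * ((m+1-n).factorial : ℂ))
      = (-1:ℂ)^(m+n+1) * ((m+n-1).factorial : ℂ) := by
  by_cases h : n % 2 = m % 2
  · -- same parity: n ≤ m
    obtain ⟨a, ha⟩ : ∃ a, m = n + 2*a := ⟨(m-n)/2, by omega⟩
    obtain ⟨d, hd⟩ : ∃ d, n = d + 1 := ⟨n-1, by omega⟩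
    subst hd; subst ha
    rw [betaCoeff, if_pos h]
    rw [show (d + 1 + 2*a + (d+1)) / 2 - 1 = d + a by omega,
        show (d + 1 + 2*a - (d+1)) / 2 + 1 = a + 1 by omega,
        show (d + 1) - 1 = d by omega,
        Rst_reindex (a+1) (d+a) _ (by omega) (by omega),
        show (d + 1 + 2*a) - (d + a) = a + 1 by omega,
        show (d + 1 + 2*a) - (a + 1) = d + a by omega,
        show (d + 1 + 2*a) + (d+1) - 1 = 2*(d+a) + 1 by omega,
        show (d + 1 + 2*a) + 1 - (d+1) = 2*a+1 by omega]
    have hsign : (-1:ℂ)^((d+1+2*a) + (d+1) + 1) = -1 := by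
      rw [show (d+1+2*a) + (d+1) + 1 = 2*(d+a+1)+1 by ring]
      exact Odd.neg_one_pow ⟨d+a+1, by ring⟩
    rw [hsign]
    linear_combination -(prodA a d)
  · rw [betaCoeff, if_neg h]
    by_cases h1' : n = 1
    · subst h1'
      rw [if_pos rfl]
      have hm : m % 2 = 0 := by omega
      have hsign : (-1:ℂ)^(m + 1 + 1) = 1 := by
        rw [show m + 1 + 1 = 2*(m/2 + 1) by omega]
        exact Even.neg_one_pow ⟨m/2+1, by ring⟩
      rw [hsign]
      simp
    · rw [if_neg h1']
      obtain ⟨a, d, had⟩ : ∃ a d, n = d + 2 ∧ m = d + 1 + 2*a := by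
        refine ⟨(m+1-n)/2, n-2, by omega, by omega⟩
      obtain ⟨hn, hm⟩ := had
      subst hn; subst hm
      rw [show (d + 1 + 2*a + (d+2) - 3) / 2 = d + a by omega,
          show (d + 1 + 2*a - (d+2) + 3) / 2 = a + 1 by omega,
          show (d + 2) - 1 = d + 1 by omega,
          show (d + 2) - 2 = d by omega,
          Rst_reindex (a+1) (d+a) _ (by omega) (by omega),
          show (d + 1 + 2*a) - (d + a) = a + 1 by omega,
          show (d + 1 + 2*a) - (a + 1) = d + a by omega,
          show (d + 1 + 2*a) + (d+2) - 1 = 2*(d+a) + 2 by omega,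
          show (d + 1 + 2*a) + 1 - (d+2) = 2*a by omega]
      have hsign : (-1:ℂ)^((d+1+2*a) + (d+2) + 1) = 1 := by
        rw [show (d+1+2*a) + (d+2) + 1 = 2*(d+a+2) by ring]
        exact Even.neg_one_pow ⟨d+a+2, by ring⟩
      rw [hsign]
      have hA : ((d+a+1).choose (d+1) : ℂ) * (d+1) = (d+a+1) * ((d+a).choose d : ℂ) := by
        exact_mod_cast (Nat.add_one_mul_choose_eq (d+a) d).symm
      have hP : ((d+a+1).choose (d+1) : ℂ) = ((d+a).choose d : ℂ) + ((d+a).choose (d+1) : ℂ) := by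
        exact_mod_cast Nat.choose_succ_succ (d+a) d
      have hR : ((d+a).choose (d+1) : ℂ) * (d+1) = ((d+a).choose d : ℂ) * a := by
        have := Nat.choose_succ_right_eq (d+a) d
        rw [show d + a - d = a by omega] at this
        exact_mod_cast this
      have hkey : (((d+1+2*a:ℕ):ℂ) + ((d+2:ℕ):ℂ)) * ((d+a).choose (d+1) : ℂ) + ((d+a).choose d : ℂ)
          = (2*a+1) * ((d+a+1).choose (d+1) : ℂ) := by
        push_cast
        linear_combination (2:ℂ) * hR - (2*(a:ℂ)+1) * hP
      rw [hkey]
      have hf1 : ((2*(d+a)+2).factorial : ℂ) = (2*(d+a)+2) * ((2*(d+a)+1).factorial : ℂ) := by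
        exact_mod_cast Nat.factorial_succ (2*(d+a)+1)
      have hf2 : ((d+1).factorial : ℂ) = (d+1) * (d.factorial : ℂ) := by
        exact_mod_cast Nat.factorial_succ d
      have hf3 : ((2*a+1).factorial : ℂ) = (2*a+1) * ((2*a).factorial : ℂ) := by
        exact_mod_cast Nat.factorial_succ (2*a)
      have hprod := prodA a d
      rw [hf3] at hprod
      rw [hf1, hf2]
      linear_combination ((2:ℂ)*a+1) * 2^(d+1) * (d.factorial:ℂ) * ((2*a).factorial:ℂ)
          * (∏ j ∈ Finset.Icc (a+1) (d+a), (2*(j:ℂ)+1)) * hA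
        + 2 * ((d:ℂ)+a+1) * hprod

/-- Explicit formula for the finite Fourier transform of the Legendre polynomials. -/
theorem legendre_fourier (m : ℕ) (l : ℂ) (hl : l ≠ 0) :
    (∫ x in (-1:ℝ)..1, Complex.exp (-Complex.I * l * x) * (((legendre m).eval x : ℝ) : ℂ)) =
      ∑ n ∈ Finset.Icc 1 (m + 1), betaCoeff m n *
        (Complex.exp (Complex.I * l) / (Complex.I * l)^n
          + (-1:ℂ)^(m+n) * Complex.exp (-Complex.I * l) / (Complex.I * l)^n) := by
  have hcast : Set.EqOn (fun x : ℝ => Complex.exp (-Complex.I * l * x) * (((legendre m).eval x : ℝ) : ℂ))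
      (fun x : ℝ => Complex.exp (-(Complex.I*l) * x) * (legC m).eval (x:ℂ))
      (Set.uIcc (-1:ℝ) 1) := by
    intro x _
    simp only []
    congr 1
    · congr 1
      ring
    · unfold legC
      rw [Polynomial.eval_map, ← Complex.coe_algebraMap, Polynomial.eval₂_at_apply]
  rw [intervalIntegral.integral_congr hcast, integral_exp_mul_legC m l hl]
  -- reindex the RHS sum
  have hreindex : ∑ n ∈ Finset.Icc 1 (m + 1), betaCoeff m n *
        (Complex.exp (Complex.I * l) / (Complex.I * l)^n
          + (-1:ℂ)^(m+n) * Complex.exp (-Complex.I * l) / (Complex.I * l)^n)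
      = ∑ k ∈ Finset.range (m+1), betaCoeff m (k+1) *
        (Complex.exp (Complex.I * l) / (Complex.I * l)^(k+1)
          + (-1:ℂ)^(m+(k+1)) * Complex.exp (-Complex.I * l) / (Complex.I * l)^(k+1)) := by
    refine Finset.sum_nbij' (fun n => n - 1) (fun k => k + 1) ?_ ?_ ?_ ?_ ?_
    · intro n hn
      simp only [Finset.mem_Icc] at hn
      simp only [Finset.mem_range]
      omega
    · intro k hk
      simp only [Finset.mem_range] at hk
      simp only [Finset.mem_Icc]
      omega
    · intro n hn
      simp only [Finset.mem_Icc] at hn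
      show n - 1 + 1 = n
      omega
    · intro k hk
      show k + 1 - 1 = k
      omega
    · intro n hn
      simp only [Finset.mem_Icc] at hn
      rw [show n - 1 + 1 = n by omega]
  rw [hreindex]
  refine Finset.sum_congr rfl fun k hk => ?_
  simp only [Finset.mem_range] at hk
  have hkm : k ≤ m := by omega
  -- the coefficient identity
  have hD : (2:ℂ)^k * ((k.factorial:ℕ):ℂ) * (((m-k).factorial:ℕ):ℂ) ≠ 0 := by
    refine mul_ne_zero (mul_ne_zero (pow_ne_zero _ two_ne_zero) ?_) ?_ <;>
      exact Nat.cast_ne_zero.2 (Nat.factorial_ne_zero _)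
  have hbeta := betaVal m (k+1) (by omega) (by omega)
  rw [show (k+1) - 1 = k by omega, show m + 1 - (k+1) = m - k by omega,
      show m + (k+1) - 1 = m + k by omega] at hbeta
  have he1 := legC_eval_one m k hkm
  have hsgn2 : (-1:ℂ)^(m+(k+1)+1) = (-1:ℂ)^(m+k) := by
    rw [show m+(k+1)+1 = (m+k)+2 by ring, pow_add]
    norm_num
  rw [hsgn2] at hbeta
  have hbe : betaCoeff m (k+1) = (-1:ℂ)^(m+k) * (derivative^[k] (legC m)).eval 1 := by
    apply mul_right_cancel₀ hD
    rw [hbeta, mul_assoc ((-1:ℂ)^(m+k)), he1]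
  rw [legC_eval_neg_one m k hkm, hbe]
  have hodd : (-1:ℂ)^(m+k) * (-1:ℂ)^(m+(k+1)) = -1 := by
    rw [← pow_add, show (m+k)+(m+(k+1)) = 2*(m+k)+1 by ring, pow_add, pow_mul]
    norm_num
  have hmm : -Complex.I * l = -(Complex.I * l) := by ring
  rw [hmm]
  set E := (derivative^[k] (legC m)).eval 1
  set μ := Complex.I * l
  linear_combination (-(E * Complex.exp (-μ) / μ^(k+1))) * hodd
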